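/- arXiv:0912.2437 — 2 statements merged into one kernel-verified Lean document; each statement's English description precedes it below -/
import Mathlib

section
/- Let φ₁′, …, φ_K′ : ℝ → ℝ be positive functions with φ_k′(b) > φ_{k−1}′(b) and φ_k′(b) − φ_{k−1}′(b) ≥ d(φ_k′(b) + φ_{k−1}′(b)) for all b and all k ≥ 2, where d > 0. Let 0 < Δ < d/(1+d). Then for each fixed (a,b) with a > 0, there is at most one k ∈ {1,…,K} such that |a·φ_k′(b) − 1| < Δ. -/
/-- Zone-separation lemma: under the well-separation condition on the instantaneous
frequencies `φ_k′`, for each fixed `(a,b)` with `a > 0` there is at most one `k`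
with `|a φ_k′(b) − 1| < Δ`, provided `0 < Δ < d/(1+d)`. -/
theorem zone_separation (K : ℕ) (φ' : ℕ → ℝ → ℝ) (d Δ : ℝ)
    (hd : 0 < d) (hΔ : 0 < Δ) (hΔd : Δ < d / (1 + d))
    (hpos : ∀ k < K, ∀ b : ℝ, 0 < φ' k b)
    (hsep : ∀ k : ℕ, k + 1 < K → ∀ b : ℝ,
      φ' k b < φ' (k + 1) b ∧ φ' (k + 1) b - φ' k b ≥ d * (φ' (k + 1) b + φ' k b)) :
    ∀ (a b : ℝ), 0 < a → ∀ k < K, ∀ l < K,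
      |a * φ' k b - 1| < Δ → |a * φ' l b - 1| < Δ → k = l := by
  intro a b ha
  -- monotonicity in the index
  have mono : ∀ b : ℝ, ∀ m n : ℕ, m ≤ n → n < K → φ' m b ≤ φ' n b := by
    intro b m n hmn hnK
    induction n with
    | zero => simp_all
    | succ n ih =>
      rcases Nat.lt_succ_iff_lt_or_eq.mp (Nat.lt_succ_of_le hmn) with h | h
      · have h1 := (hsep n hnK b).1
        exact le_trans (ih (Nat.lt_succ_iff.mp h) (Nat.lt_of_succ_lt hnK)) h1.le
      · exact le_of_eq (by rw [h])
  have key : ∀ l k : ℕ, l < k → k < K →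
      |a * φ' k b - 1| < Δ → |a * φ' l b - 1| < Δ → False := by
    intro l k hlk hkK hk hl
    have hl1K : l + 1 < K := lt_of_le_of_lt hlk hkK
    have hlK : l < K := lt_trans (Nat.lt_succ_self l) hl1K
    obtain ⟨hlt, hgap⟩ := hsep l hl1K b
    have hpl : 0 < φ' l b := hpos l hlK b
    have hpl1 : 0 < φ' (l + 1) b := hpos (l + 1) hl1K b
    have hpk : 0 < φ' k b := hpos k hkK b
    have hk1 : φ' (l + 1) b ≤ φ' k b := mono b (l + 1) k hlk hkK
    have hd1 : d < 1 := by nlinarith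
    -- main separation inequality for arbitrary l < k
    have hsepkl : φ' k b - φ' l b ≥ d * (φ' k b + φ' l b) := by nlinarith
    rw [abs_lt] at hk hl
    have h1d : (0:ℝ) < 1 + d := by linarith
    have hΔd' : Δ * (1 + d) < d := (lt_div_iff₀ h1d).mp hΔd
    nlinarith [mul_le_mul_of_nonneg_left hsepkl ha.le]
  intro k hkK l hlK hk hl
  rcases lt_trichotomy k l with h | h | h
  · exact absurd (key k l h hlK hl hk) (by simp)
  · exact h
  · exact absurd (key l k h hkK hk hl) (by simp)
end

section
/- Let W, D, B ∈ ℂ and φ′ > 0 with |−iD − φ′B| ≤ ε·a^{1/2}·Γ₂, |W − B| ≤ ε·a^{3/2}·Γ₁, and |W| ≥ ε^{1/3}. Then the quantity ω := −iD/W satisfies |ω − φ′| ≤ √a·(Γ₂ + a·Γ₁·φ′)·ε^{2/3}. -/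
/-- Core algebraic step of Estimate 5: with `|−iD − φ′B| ≤ ε a^{1/2} Γ₂`,
`|W − B| ≤ ε a^{3/2} Γ₁` and `|W| ≥ ε^{1/3}`, the quantity `ω = −iD/W` satisfies
`|ω − φ′| ≤ √a (Γ₂ + a Γ₁ φ′) ε^{2/3}`. -/
theorem instFreq_accuracy (W D B : ℂ) (φ' ε a Γ₁ Γ₂ : ℝ)
    (hφ : 0 < φ') (hε : 0 < ε) (ha : 0 < a) (hΓ₁ : 0 < Γ₁) (hΓ₂ : 0 < Γ₂)
    (h1 : ‖-Complex.I * D - (φ' : ℂ) * B‖ ≤ ε * Real.sqrt a * Γ₂)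
    (h2 : ‖W - B‖ ≤ ε * (a * Real.sqrt a) * Γ₁)
    (h3 : ε ^ ((1 : ℝ)/3) ≤ ‖W‖) :
    ‖-Complex.I * D / W - (φ' : ℂ)‖
      ≤ Real.sqrt a * (Γ₂ + a * Γ₁ * φ') * ε ^ ((2 : ℝ)/3) := by
  have hεr : (0:ℝ) < ε ^ ((1:ℝ)/3) := Real.rpow_pos_of_pos hε _
  have hW0 : W ≠ 0 := by
    intro h
    rw [h, norm_zero] at h3
    linarith
  have heq : -Complex.I * D / W - (φ' : ℂ)
      = ((-Complex.I * D - (φ' : ℂ) * B) + (φ' : ℂ) * (B - W)) / W := by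
    field_simp
    ring
  rw [heq, norm_div]
  have hsa : (0:ℝ) ≤ Real.sqrt a := Real.sqrt_nonneg a
  have hnum : ‖(-Complex.I * D - (φ' : ℂ) * B) + (φ' : ℂ) * (B - W)‖
      ≤ ε * Real.sqrt a * Γ₂ + φ' * (ε * (a * Real.sqrt a) * Γ₁) := by
    calc ‖(-Complex.I * D - (φ' : ℂ) * B) + (φ' : ℂ) * (B - W)‖
        ≤ ‖-Complex.I * D - (φ' : ℂ) * B‖ + ‖(φ' : ℂ) * (B - W)‖ := norm_add_le _ _
      _ ≤ ε * Real.sqrt a * Γ₂ + φ' * (ε * (a * Real.sqrt a) * Γ₁) := by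
          rw [norm_mul, Complex.norm_real, Real.norm_of_nonneg hφ.le]
          have : ‖B - W‖ = ‖W - B‖ := by rw [← norm_neg]; ring_nf
          rw [this]
          gcongr
  have hkey : ε * Real.sqrt a * Γ₂ + φ' * (ε * (a * Real.sqrt a) * Γ₁)
      = (Real.sqrt a * (Γ₂ + a * Γ₁ * φ') * ε ^ ((2:ℝ)/3)) * ε ^ ((1:ℝ)/3) := by
    have : ε ^ ((2:ℝ)/3) * ε ^ ((1:ℝ)/3) = ε := by
      rw [← Real.rpow_add hε]
      norm_num
    calc ε * Real.sqrt a * Γ₂ + φ' * (ε * (a * Real.sqrt a) * Γ₁)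
        = (ε ^ ((2:ℝ)/3) * ε ^ ((1:ℝ)/3)) * Real.sqrt a * Γ₂
          + φ' * ((ε ^ ((2:ℝ)/3) * ε ^ ((1:ℝ)/3)) * (a * Real.sqrt a) * Γ₁) := by rw [this]
      _ = (Real.sqrt a * (Γ₂ + a * Γ₁ * φ') * ε ^ ((2:ℝ)/3)) * ε ^ ((1:ℝ)/3) := by ring
  rw [div_le_iff₀ (lt_of_lt_of_le hεr h3)]
  calc ‖(-Complex.I * D - (φ' : ℂ) * B) + (φ' : ℂ) * (B - W)‖
      ≤ ε * Real.sqrt a * Γ₂ + φ' * (ε * (a * Real.sqrt a) * Γ₁) := hnum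
    _ = (Real.sqrt a * (Γ₂ + a * Γ₁ * φ') * ε ^ ((2:ℝ)/3)) * ε ^ ((1:ℝ)/3) := hkey
    _ ≤ (Real.sqrt a * (Γ₂ + a * Γ₁ * φ') * ε ^ ((2:ℝ)/3)) * ‖W‖ := by
        gcongr
end
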